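/- Let k ≥ 1 be an integer, 0 < ε < π/2, and ε < τ < π. Let f : [0,τ] → [0,∞) be continuous, sin^k-concave, attaining its maximum at 0, and with f(ε) > 0. Let c = f(ε)/cos(ε)^k and h(t) = c·cos(t)^k. Then f(x) ≥ h(x) for all x ∈ [0,ε], f(x) ≤ h(x) for all x ∈ [ε,τ], and τ ≤ π/2. -/

import Mathlib

/-- `f` is `sin^k`-concave on the interval `I` (of length `< π`). -/
def SinPowConcaveOn (k : ℕ) (I : Set ℝ) (f : ℝ → ℝ) : Prop :=
  ∀ x₁ ∈ I, ∀ x₂ ∈ I, x₁ ≠ x₂ → ∀ α : ℝ, 0 < α → α < 1 →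
    (Real.sin (α * |x₂ - x₁|) / Real.sin |x₂ - x₁|) * f x₁ ^ (1 / (k : ℝ)) +
        (Real.sin ((1 - α) * |x₂ - x₁|) / Real.sin |x₂ - x₁|) * f x₂ ^ (1 / (k : ℝ))
      ≤ f (α * x₁ + (1 - α) * x₂) ^ (1 / (k : ℝ))

/-- Comparison of a `sin^k`-concave function, maximal at `0`, with the model function
`h(t) = c·cos(t)^k` matched at `ε`: `f ≥ h` on `[0,ε]`, `f ≤ h` on `[ε,τ]`, and
necessarily `τ ≤ π/2`. -/
theorem sinPowConcave_cos_comparison (k : ℕ) (hk : 1 ≤ k)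
    (ε τ : ℝ) (hε0 : 0 < ε) (hε : ε < Real.pi / 2) (hετ : ε < τ) (hτ : τ < Real.pi)
    (f : ℝ → ℝ) (hfc : ContinuousOn f (Set.Icc 0 τ))
    (hfnonneg : ∀ x ∈ Set.Icc 0 τ, 0 ≤ f x)
    (hconc : SinPowConcaveOn k (Set.Icc 0 τ) f)
    (hmax : ∀ x ∈ Set.Icc 0 τ, f x ≤ f 0)
    (hfε : 0 < f ε) :
    (∀ x ∈ Set.Icc 0 ε, f ε / Real.cos ε ^ k * Real.cos x ^ k ≤ f x) ∧
      (∀ x ∈ Set.Icc ε τ, f x ≤ f ε / Real.cos ε ^ k * Real.cos x ^ k) ∧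
      τ ≤ Real.pi / 2 := by
  have hk0 : (k : ℝ) ≠ 0 := Nat.cast_ne_zero.mpr (by omega)
  have hik : (0:ℝ) ≤ 1 / (k:ℝ) := by positivity
  have hτ0 : (0:ℝ) < τ := hε0.trans hετ
  have h0m : (0:ℝ) ∈ Set.Icc (0:ℝ) τ := ⟨le_refl _, hτ0.le⟩
  have hεm : ε ∈ Set.Icc (0:ℝ) τ := ⟨hε0.le, hετ.le⟩
  set g : ℝ → ℝ := fun t => f t ^ (1 / (k:ℝ)) with hg
  have hgnonneg : ∀ t ∈ Set.Icc (0:ℝ) τ, 0 ≤ g t := fun t ht =>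
    Real.rpow_nonneg (hfnonneg t ht) _
  have hgmax : ∀ t ∈ Set.Icc (0:ℝ) τ, g t ≤ g 0 := fun t ht =>
    Real.rpow_le_rpow (hfnonneg t ht) (hmax t ht) hik
  have hg0 : 0 < g 0 :=
    lt_of_lt_of_le (Real.rpow_pos_of_pos hfε _) (hgmax ε hεm)
  have hgε : 0 < g ε := Real.rpow_pos_of_pos hfε _
  have hcosε : 0 < Real.cos ε := Real.cos_pos_of_mem_Ioo ⟨by linarith [Real.pi_pos], hε⟩
  -- fundamental chord inequality from 0 to y, evaluated at t
  have chord : ∀ t y : ℝ, 0 < t → t < y → y ≤ τ →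
      Real.sin (y - t) * g 0 + Real.sin t * g y ≤ g t * Real.sin y := by
    intro t y ht hty hyτ
    have hy0 : 0 < y := ht.trans hty
    have hyπ : y < Real.pi := lt_of_le_of_lt hyτ hτ
    have hsy : 0 < Real.sin y := Real.sin_pos_of_pos_of_lt_pi hy0 hyπ
    have hym : y ∈ Set.Icc (0:ℝ) τ := ⟨hy0.le, hyτ⟩
    have hne : (0:ℝ) ≠ y := ne_of_lt hy0
    have hα0 : (0:ℝ) < 1 - t / y := by
      have := (div_lt_one hy0).mpr hty; linarith
    have hα1 : (1:ℝ) - t / y < 1 := by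
      have := div_pos ht hy0; linarith
    have H := hconc 0 h0m y hym hne (1 - t / y) hα0 hα1
    have habs : |y - (0:ℝ)| = y := by rw [sub_zero, abs_of_pos hy0]
    rw [habs] at H
    have e1 : (1 - t / y) * y = y - t := by field_simp
    have e2 : (1 - (1 - t / y)) * y = t := by field_simp; ring
    rw [e1, e2, mul_zero, zero_add] at H
    rw [div_mul_eq_mul_div, div_mul_eq_mul_div, ← add_div,
      div_le_iff₀ hsy] at H
    exact H
  -- Lemma B : g y ≤ g 0 * cos y for y ∈ (0, τ]
  have hB : ∀ y : ℝ, 0 < y → y ≤ τ → g y ≤ g 0 * Real.cos y := by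
    intro y hy0 hyτ
    have hyπ : y < Real.pi := lt_of_le_of_lt hyτ hτ
    have key : ∀ t ∈ Set.Ioo (0:ℝ) y, g y ≤ g 0 * Real.cos (y - t) := by
      intro t ht
      have hst : 0 < Real.sin t :=
        Real.sin_pos_of_pos_of_lt_pi ht.1 (ht.2.trans hyπ)
      have hsyt : 0 ≤ Real.sin (y - t) :=
        Real.sin_nonneg_of_nonneg_of_le_pi (by linarith [ht.1, ht.2]) (by linarith [ht.1, ht.2])
      have hC := chord t y ht.1 ht.2 hyτ
      have hgt : g t * Real.sin y ≤ g 0 * Real.sin y :=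
        mul_le_mul_of_nonneg_right
          (hgmax t ⟨ht.1.le, ht.2.le.trans hyτ⟩)
          (Real.sin_nonneg_of_nonneg_of_le_pi (by linarith [ht.1]) hyπ.le)
      have hsin : Real.sin y =
          Real.sin (y - t) * Real.cos t + Real.cos (y - t) * Real.sin t := by
        rw [← Real.sin_add]; ring_nf
      have hcost : Real.cos t ≤ 1 := Real.cos_le_one t
      have hprod : 0 ≤ g 0 * (Real.sin (y - t) * (1 - Real.cos t)) :=
        mul_nonneg hg0.le (mul_nonneg hsyt (by linarith))
      have hmul : g y * Real.sin t ≤ g 0 * Real.cos (y - t) * Real.sin t := by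
        nlinarith [hC, hgt, hsin, hprod]
      exact le_of_mul_le_mul_right hmul hst
    have htends : Filter.Tendsto (fun t => g 0 * Real.cos (y - t))
        (nhdsWithin 0 (Set.Ioi 0)) (nhds (g 0 * Real.cos y)) := by
      have hcont : Continuous fun t : ℝ => g 0 * Real.cos (y - t) :=
        continuous_const.mul (Real.continuous_cos.comp (continuous_const.sub continuous_id))
      have := hcont.tendsto 0
      simp only [sub_zero] at this
      exact this.mono_left nhdsWithin_le_nhds
    refine ge_of_tendsto htends ?_
    filter_upwards [Ioo_mem_nhdsGT_of_mem (Set.left_mem_Ico.mpr hy0)] with t ht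
    exact key t ht
  -- τ ≤ π/2
  have hτhalf : τ ≤ Real.pi / 2 := by
    by_contra h
    push_neg at h
    have h1 : g τ ≤ g 0 * Real.cos τ := hB τ hτ0 le_rfl
    have h2 : Real.cos τ < 0 :=
      Real.cos_neg_of_pi_div_two_lt_of_lt h (by linarith [Real.pi_pos])
    have h3 : 0 ≤ g τ := hgnonneg τ ⟨hτ0.le, le_rfl⟩
    nlinarith
  -- helper for converting g-inequalities to f-inequalities
  have hpow : ∀ a : ℝ, 0 ≤ a → (a ^ (1 / (k:ℝ))) ^ k = a := by
    intro a ha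
    rw [← Real.rpow_natCast (a ^ (1 / (k:ℝ))) k, ← Real.rpow_mul ha, one_div,
      inv_mul_cancel₀ hk0, Real.rpow_one]
  have hcosεk : 0 < Real.cos ε ^ k := pow_pos hcosε k
  refine ⟨?_, ?_, hτhalf⟩
  · -- f ≥ h on [0, ε]
    intro x hx
    have hxm : x ∈ Set.Icc (0:ℝ) τ := ⟨hx.1, hx.2.trans hετ.le⟩
    have hcosx : 0 ≤ Real.cos x :=
      Real.cos_nonneg_of_mem_Icc ⟨by linarith [Real.pi_pos, hx.1], by linarith [hx.2]⟩
    have hgineq : g ε * Real.cos x ≤ g x * Real.cos ε := by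
      rcases eq_or_lt_of_le hx.1 with h0x | h0x
      · -- x = 0
        subst h0x
        rw [Real.cos_zero, mul_one]
        exact hB ε hε0 hετ.le
      · rcases eq_or_lt_of_le hx.2 with hxε | hxε
        · rw [hxε]
        · -- 0 < x < ε : chord from 0 to ε at x
          have hsε : 0 < Real.sin ε :=
            Real.sin_pos_of_pos_of_lt_pi hε0 (by linarith [Real.pi_pos])
          have hsεx : 0 ≤ Real.sin (ε - x) :=
            Real.sin_nonneg_of_nonneg_of_le_pi (by linarith) (by linarith [Real.pi_pos])
          have hC := chord x ε h0x hxε hετ.le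
          have hBε : g ε ≤ g 0 * Real.cos ε := hB ε hε0 hετ.le
          have hsin : Real.sin (ε - x) =
              Real.sin ε * Real.cos x - Real.cos ε * Real.sin x := Real.sin_sub ε x
          -- sin(ε−x)·gε ≤ sin(ε−x)·g0·cosε , then combine
          have h1 : Real.sin (ε - x) * g ε ≤ Real.sin (ε - x) * (g 0 * Real.cos ε) :=
            mul_le_mul_of_nonneg_left hBε hsεx
          have h2 := mul_le_mul_of_nonneg_right hC hcosε.le
          -- h2 : (sin(ε−x) g0 + sin x g ε) cos ε ≤ g x sin ε cos ε
          have hgoal : g ε * (Real.sin ε * Real.cos x) ≤ g x * Real.cos ε * Real.sin ε := by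
            nlinarith [h1, h2, hsin]
          have := le_of_mul_le_mul_right
            (by nlinarith [hgoal] : g ε * Real.cos x * Real.sin ε ≤ g x * Real.cos ε * Real.sin ε)
            hsε
          exact this
    -- convert to f
    have hp := pow_le_pow_left₀ (mul_nonneg (hgnonneg ε hεm) hcosx) hgineq k
    rw [mul_pow, mul_pow, hpow _ (hfnonneg ε hεm), hpow _ (hfnonneg x hxm)] at hp
    rw [div_mul_eq_mul_div, div_le_iff₀ hcosεk]
    linarith
  · -- f ≤ h on [ε, τ]
    intro x hx
    have hxm : x ∈ Set.Icc (0:ℝ) τ := ⟨hε0.le.trans hx.1, hx.2⟩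
    have hx0 : 0 < x := hε0.trans_le hx.1
    have hcosx : 0 ≤ Real.cos x :=
      Real.cos_nonneg_of_mem_Icc ⟨by linarith [Real.pi_pos], by linarith [hx.2, hτhalf]⟩
    have hgineq : g x * Real.cos ε ≤ g ε * Real.cos x := by
      rcases eq_or_lt_of_le hx.1 with hεx | hεx
      · rw [← hεx]
      · -- ε < x ≤ τ : chord from 0 to x at ε
        have hxπ : x < Real.pi := lt_of_le_of_lt hx.2 hτ
        have hsx : 0 < Real.sin x := Real.sin_pos_of_pos_of_lt_pi hx0 hxπ
        have hsxε : 0 ≤ Real.sin (x - ε) :=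
          Real.sin_nonneg_of_nonneg_of_le_pi (by linarith) (by linarith)
        have hC := chord ε x hε0 hεx hx.2
        have hBx : g x ≤ g 0 * Real.cos x := hB x hx0 hx.2
        have hsin : Real.sin (x - ε) =
            Real.sin x * Real.cos ε - Real.cos x * Real.sin ε := Real.sin_sub x ε
        have h1 : Real.sin (x - ε) * g x ≤ Real.sin (x - ε) * (g 0 * Real.cos x) :=
          mul_le_mul_of_nonneg_left hBx hsxε
        have h2 := mul_le_mul_of_nonneg_right hC hcosx
        have hsε : 0 < Real.sin ε :=
          Real.sin_pos_of_pos_of_lt_pi hε0 (by linarith [Real.pi_pos])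
        have e : g x * (Real.sin x * Real.cos ε)
            = g x * Real.sin (x - ε) + g x * (Real.cos x * Real.sin ε) := by
          rw [hsin]; ring
        have hgoal : g x * Real.cos ε * Real.sin x ≤ g ε * Real.cos x * Real.sin x := by
          nlinarith [h1, h2, e]
        exact le_of_mul_le_mul_right hgoal hsx
    have hp := pow_le_pow_left₀ (mul_nonneg (hgnonneg x hxm) hcosε.le) hgineq k
    rw [mul_pow, mul_pow, hpow _ (hfnonneg ε hεm), hpow _ (hfnonneg x hxm)] at hp
    rw [div_mul_eq_mul_div, le_div_iff₀ hcosεk]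
    linarith
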